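/- Fix a training data set (E, λ) over d features and a decision tree T, and let x₀ ∈ ℝ be smaller than every feature value of every example. For a leaf v, Qᵉˣ[v, (l_i, r_i), k′] equals min(|{e ∈ E[(l_i, r_i)] : λ(e) = blue}|, |{e ∈ E[(l_i, r_i)] : λ(e) = red}|). For a cut v of T with left child w and right child u, Qᵉˣ[v, (l_i, r_i), k′] equals the minimum of: (a) the minimum over β ∈ {0, …, k′} of Qᵉˣ[w, L_{feat(v)}(thr(v)), β] + Qᵉˣ[u, R_{feat(v)}(thr(v)), k′ − β]; and (b) if k′ ≥ 1, the minimum over β ∈ {0, …, k′ − 1}, j′ ∈ {1, …, d}, and x ∈ {e[j′] : e ∈ E} ∪ {x₀} of Qᵉˣ[w, L_{j′}(x), β] + Qᵉˣ[u, R_{j′}(x), k′ − β − 1]; here L_{j}(x) denotes the threshold sequence obtained from (l_i, r_i) by replacing the j-th interval with (l_j, min(r_j, x)], and R_{j}(x) the one obtained by replacing the j-th interval with (max(l_j, x), r_j]. -/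

import Mathlib

/-- The two class labels. -/
def blue : Bool := true

def red : Bool := false

/-- Decision trees with features of type `α`: each leaf carries a class label,
each internal node (a *cut*) carries a feature and a real threshold. -/
inductive DTree (α : Type) : Type
  | leaf (label : Bool) : DTree α
  | node (feat : α) (thr : ℝ) (left right : DTree α) : DTree α

namespace DTree

/-- The class that the tree assigns to the example `e`. -/
noncomputable def classify {α : Type} : DTree α → (α → ℝ) → Bool
  | leaf c, _ => c
  | node f x l r, e => if e f ≤ x then l.classify e else r.classify e

end DTree

/-- `T'` has the same underlying tree shape as `T`; features, thresholds and leaf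
labels may all differ. -/
def SameShape {α : Type} : DTree α → DTree α → Prop
  | DTree.leaf _, DTree.leaf _ => True
  | DTree.node _ _ l r, DTree.node _ _ l' r' => SameShape l l' ∧ SameShape r r'
  | _, _ => False

/-- The number of cuts at which the (feature, threshold) pairs of the two
(same-shaped) trees differ, i.e. the number of cut exchanges performed. -/
noncomputable def exCost {α : Type} [DecidableEq α] : DTree α → DTree α → ℕ
  | DTree.node f x l r, DTree.node f' x' l' r' =>
      (if f = f' ∧ x = x' then 0 else 1) + exCost l l' + exCost r r'
  | _, _ => 0

open Classical in
/-- The box `E[(l_i, r_i)]` of a threshold sequence: the examples `e` with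
`l i < e i ≤ r i` for every feature `i`. -/
noncomputable def box {d n : ℕ} (E : Fin n → Fin d → ℝ) (l r : Fin d → EReal) :
    Finset (Fin n) :=
  Finset.univ.filter
    (fun i => ∀ a : Fin d, l a < ((E i a : ℝ) : EReal) ∧ ((E i a : ℝ) : EReal) ≤ r a)

/-- Errors of `T` among the examples indexed by `S`. -/
noncomputable def errorCountOn {d n : ℕ} (E : Fin n → Fin d → ℝ)
    (lab : Fin n → Bool) (S : Finset (Fin n)) (T : DTree (Fin d)) : ℕ :=
  (S.filter (fun i => T.classify (E i) ≠ lab i)).card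

/-- `Qex E lab T l r k'`: the minimum number of errors, on the family `E[(l, r)]`, of a
decision tree obtained from the subtree `T` by replacing the features and thresholds of
at most `k'` of its cuts by arbitrary features in `Fin d` and arbitrary real numbers
and relabeling its leaves arbitrarily. -/
noncomputable def Qex {d n : ℕ} (E : Fin n → Fin d → ℝ) (lab : Fin n → Bool)
    (T : DTree (Fin d)) (l r : Fin d → EReal) (k' : ℕ) : ℕ :=
  sInf {m : ℕ | ∃ T' : DTree (Fin d), SameShape T T' ∧ exCost T T' ≤ k' ∧
    errorCountOn E lab (box E l r) T' = m}

section Helpers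

lemma sameShape_refl {α : Type} (T : DTree α) : SameShape T T := by
  induction T with
  | leaf c => trivial
  | node f x L R ihl ihr => exact ⟨ihl, ihr⟩

lemma exCost_self {α : Type} [DecidableEq α] (T : DTree α) : exCost T T = 0 := by
  induction T with
  | leaf c => rfl
  | node f x L R ihl ihr => simp [exCost, ihl, ihr]

variable {d n : ℕ} (E : Fin n → Fin d → ℝ) (lab : Fin n → Bool)

lemma qexSet_nonempty (T : DTree (Fin d)) (l r : Fin d → EReal) (k' : ℕ) :
    {m : ℕ | ∃ T' : DTree (Fin d), SameShape T T' ∧ exCost T T' ≤ k' ∧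
      errorCountOn E lab (box E l r) T' = m}.Nonempty :=
  ⟨_, T, sameShape_refl T, by simp [exCost_self], rfl⟩

lemma Qex_le (T T' : DTree (Fin d)) (l r : Fin d → EReal) (k' : ℕ)
    (h1 : SameShape T T') (h2 : exCost T T' ≤ k') :
    Qex E lab T l r k' ≤ errorCountOn E lab (box E l r) T' :=
  Nat.sInf_le ⟨T', h1, h2, rfl⟩

lemma Qex_attained (T : DTree (Fin d)) (l r : Fin d → EReal) (k' : ℕ) :
    ∃ T', SameShape T T' ∧ exCost T T' ≤ k' ∧
      errorCountOn E lab (box E l r) T' = Qex E lab T l r k' :=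
  Nat.sInf_mem (qexSet_nonempty E lab T l r k')

lemma Qex_anti (T : DTree (Fin d)) (l r : Fin d → EReal) {k₁ k₂ : ℕ} (h : k₁ ≤ k₂) :
    Qex E lab T l r k₂ ≤ Qex E lab T l r k₁ := by
  obtain ⟨T', h1, h2, h3⟩ := Qex_attained E lab T l r k₁
  calc Qex E lab T l r k₂ ≤ _ := Qex_le E lab T T' l r k₂ h1 (h2.trans h)
  _ = _ := h3

open Classical in
lemma box_filter_le (l r : Fin d → EReal) (j : Fin d) (x : ℝ) :
    (box E l r).filter (fun i => E i j ≤ x) =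
      box E l (Function.update r j (min (r j) ((x : ℝ) : EReal))) := by
  ext i
  simp only [box, Finset.mem_filter, Finset.mem_univ, true_and]
  constructor
  · rintro ⟨h, hx⟩ a
    rcases eq_or_ne a j with rfl | hne
    · rw [Function.update_self]
      exact ⟨(h a).1, le_min (h a).2 (by exact_mod_cast hx)⟩
    · simpa [Function.update_of_ne hne] using h a
  · intro h
    have hj := h j
    simp only [Function.update_self, le_min_iff] at hj
    refine ⟨fun a => ?_, by exact_mod_cast hj.2.2⟩
    rcases eq_or_ne a j with rfl | hne
    · exact ⟨hj.1, hj.2.1⟩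
    · simpa [Function.update_of_ne hne] using h a

open Classical in
lemma box_filter_gt (l r : Fin d → EReal) (j : Fin d) (x : ℝ) :
    (box E l r).filter (fun i => ¬ E i j ≤ x) =
      box E (Function.update l j (max (l j) ((x : ℝ) : EReal))) r := by
  ext i
  simp only [box, Finset.mem_filter, Finset.mem_univ, true_and]
  constructor
  · rintro ⟨h, hx⟩ a
    rcases eq_or_ne a j with rfl | hne
    · refine ⟨?_, (h a).2⟩
      rw [Function.update_self, max_lt_iff]
      exact ⟨(h a).1, by exact_mod_cast not_le.mp hx⟩
    · simpa [Function.update_of_ne hne] using h a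
  · intro h
    have hj := h j
    simp only [Function.update_self, max_lt_iff] at hj
    refine ⟨fun a => ?_, ?_⟩
    · rcases eq_or_ne a j with rfl | hne
      · exact ⟨hj.1.1, hj.2⟩
      · simpa [Function.update_of_ne hne] using h a
    · rw [not_le]
      exact_mod_cast hj.1.2

open Classical in
lemma errorCountOn_node (S : Finset (Fin n)) (f : Fin d) (x : ℝ)
    (L R : DTree (Fin d)) :
    errorCountOn E lab S (DTree.node f x L R) =
      errorCountOn E lab (S.filter (fun i => E i f ≤ x)) L +
        errorCountOn E lab (S.filter (fun i => ¬ E i f ≤ x)) R := by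
  unfold errorCountOn
  rw [Finset.filter_filter, Finset.filter_filter]
  have hsplit : S.filter
      (fun i => DTree.classify (DTree.node f x L R) (E i) ≠ lab i)
      = (S.filter (fun i => E i f ≤ x ∧ L.classify (E i) ≠ lab i))
        ∪ (S.filter (fun i => ¬ E i f ≤ x ∧ R.classify (E i) ≠ lab i)) := by
    ext i
    by_cases h : E i f ≤ x
    · rw [Finset.mem_union, Finset.mem_filter, Finset.mem_filter, Finset.mem_filter]; simp [DTree.classify, h]
    · rw [Finset.mem_union, Finset.mem_filter, Finset.mem_filter, Finset.mem_filter]; simp [DTree.classify, h, not_le.mp h]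
  rw [hsplit, Finset.card_union_of_disjoint]
  rw [Finset.disjoint_left]
  intro i hi hi'
  simp only [Finset.mem_filter] at hi hi'
  exact hi'.2.1 hi.2.1

end Helpers

/-- The dynamic-programming recurrence for `Qex`. For a leaf, `Qex` is
the minimum of the numbers of blue and red examples in the box. For a cut with feature
`j`, threshold `x`, left child `w` and right child `u`, `Qex` is the minimum of
(a) splitting the budget while keeping the cut `(j, x)`, and (b) (if `k' ≥ 1`)
splitting the budget and exchanging the cut for a cut on some feature `j'` with some
threshold in `{e j' : e ∈ E} ∪ {x₀}`; the left child is evaluated on the box with the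
`j'`-th interval clipped from above and the right child with it clipped from below. -/
theorem stmt9 {d n : ℕ} (E : Fin n → Fin d → ℝ) (lab : Fin n → Bool)
    (x₀ : ℝ) (hx₀ : ∀ (i : Fin n) (j : Fin d), x₀ < E i j)
    (l r : Fin d → EReal) (hlr : ∀ a : Fin d, l a ≤ r a) (k' : ℕ) :
    (∀ c : Bool, Qex E lab (DTree.leaf c) l r k' =
      min ((box E l r).filter (fun i => lab i = blue)).card
        ((box E l r).filter (fun i => lab i = red)).card) ∧
    (∀ (j : Fin d) (x : ℝ) (w u : DTree (Fin d)),
      Qex E lab (DTree.node j x w u) l r k' =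
        sInf (
          {m : ℕ | ∃ β ≤ k',
            m = Qex E lab w l (Function.update r j (min (r j) ((x : ℝ) : EReal))) β
              + Qex E lab u (Function.update l j (max (l j) ((x : ℝ) : EReal))) r
                  (k' - β)}
          ∪ {m : ℕ | ∃ β, β + 1 ≤ k' ∧ ∃ j' : Fin d,
            ∃ y ∈ insert x₀ (Finset.univ.image (fun i : Fin n => E i j')),
              m = Qex E lab w l
                    (Function.update r j' (min (r j') ((y : ℝ) : EReal))) β
                + Qex E lab u
                    (Function.update l j' (max (l j') ((y : ℝ) : EReal))) r
                    (k' - β - 1)})) := by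
  constructor
  · -- leaf case
    intro c
    have key : {m : ℕ | ∃ T' : DTree (Fin d), SameShape (DTree.leaf c) T' ∧
        exCost (DTree.leaf c) T' ≤ k' ∧ errorCountOn E lab (box E l r) T' = m}
        = {((box E l r).filter (fun i => lab i = red)).card,
           ((box E l r).filter (fun i => lab i = blue)).card} := by
      ext m
      simp only [Set.mem_setOf_eq, Set.mem_insert_iff, Set.mem_singleton_iff]
      constructor
      · rintro ⟨T', hs, -, rfl⟩
        cases T' with
        | node f x L R => exact hs.elim
        | leaf c' =>
          unfold errorCountOn
          cases c'
          · right
            congr 1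
            apply Finset.filter_congr
            intro i _
            cases h : lab i <;> simp [DTree.classify, blue, red, h]
          · left
            congr 1
            apply Finset.filter_congr
            intro i _
            cases h : lab i <;> simp [DTree.classify, blue, red, h]
      · rintro (rfl | rfl)
        · refine ⟨DTree.leaf true, trivial, by simp [exCost], ?_⟩
          unfold errorCountOn
          congr 1
          apply Finset.filter_congr
          intro i _
          cases h : lab i <;> simp [DTree.classify, blue, red, h]
        · refine ⟨DTree.leaf false, trivial, by simp [exCost], ?_⟩
          unfold errorCountOn
          congr 1
          apply Finset.filter_congr
          intro i _
          cases h : lab i <;> simp [DTree.classify, blue, red, h]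
    unfold Qex
    rw [key, csInf_pair]
    exact min_comm _ _
  · -- node case
    intro j x w u
    apply le_antisymm
    · apply le_csInf
      · exact ⟨_, Or.inl ⟨0, Nat.zero_le _, rfl⟩⟩
      rintro m (⟨β, hβ, rfl⟩ | ⟨β, hβ, j', y, hy, rfl⟩)
      · obtain ⟨Tw, hsw, hcw, hew⟩ :=
          Qex_attained E lab w l (Function.update r j (min (r j) ((x : ℝ) : EReal))) β
        obtain ⟨Tu, hsu, hcu, heu⟩ :=
          Qex_attained E lab u (Function.update l j (max (l j) ((x : ℝ) : EReal))) r (k' - β)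
        refine Nat.sInf_le ⟨DTree.node j x Tw Tu, ⟨hsw, hsu⟩, ?_, ?_⟩
        · simp only [exCost, and_self, if_true]
          omega
        · rw [errorCountOn_node, box_filter_le, box_filter_gt, hew, heu]
      · obtain ⟨Tw, hsw, hcw, hew⟩ :=
          Qex_attained E lab w l (Function.update r j' (min (r j') ((y : ℝ) : EReal))) β
        obtain ⟨Tu, hsu, hcu, heu⟩ :=
          Qex_attained E lab u (Function.update l j' (max (l j') ((y : ℝ) : EReal))) r (k' - β - 1)
        refine Nat.sInf_le ⟨DTree.node j' y Tw Tu, ⟨hsw, hsu⟩, ?_, ?_⟩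
        · simp only [exCost]
          split <;> omega
        · rw [errorCountOn_node, box_filter_le, box_filter_gt, hew, heu]
    · obtain ⟨T', hs, hc, he⟩ := Qex_attained E lab (DTree.node j x w u) l r k'
      rw [← he]
      cases T' with
      | leaf c => exact hs.elim
      | node j'' x'' w' u' =>
        obtain ⟨hsw, hsu⟩ := hs
        simp only [exCost] at hc
        rw [errorCountOn_node E lab]
        by_cases hjx : j = j'' ∧ x = x''
        · obtain ⟨rfl, rfl⟩ := hjx
          rw [if_pos ⟨rfl, rfl⟩] at hc
          rw [box_filter_le, box_filter_gt]
          refine le_trans (Nat.sInf_le (Or.inl ⟨exCost w w', by omega, rfl⟩))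
            (add_le_add (Qex_le E lab w w' _ _ _ hsw le_rfl)
              ((Qex_anti E lab u _ _
                  (by omega : exCost u u' ≤ k' - exCost w w')).trans
                (Qex_le E lab u u' _ _ _ hsu le_rfl)))
        · rw [if_neg hjx] at hc
          have hkey : ∃ y ∈ insert x₀ (Finset.univ.image fun i : Fin n => E i j''),
              ∀ i : Fin n, E i j'' ≤ x'' ↔ E i j'' ≤ y := by
            classical
            set S : Finset ℝ :=
              (Finset.univ.image fun i : Fin n => E i j'').filter (fun v => v ≤ x'') with hSdef
            by_cases hSne : S.Nonempty
            · refine ⟨S.max' hSne, ?_, fun i => ⟨fun h => S.le_max' _ ?_, fun h => h.trans ?_⟩⟩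
              · have hm := Finset.mem_filter.mp (S.max'_mem hSne)
                exact Finset.mem_insert_of_mem hm.1
              · exact Finset.mem_filter.mpr
                  ⟨Finset.mem_image_of_mem _ (Finset.mem_univ i), h⟩
              · exact (Finset.mem_filter.mp (S.max'_mem hSne)).2
            · refine ⟨x₀, Finset.mem_insert_self _ _, fun i =>
                ⟨fun h => absurd ?_ hSne, fun h => absurd h (not_le.mpr (hx₀ i j''))⟩⟩
              exact ⟨E i j'', Finset.mem_filter.mpr
                ⟨Finset.mem_image_of_mem _ (Finset.mem_univ i), h⟩⟩
          obtain ⟨y, hymem, hiff⟩ := hkey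
          have hfl : (box E l r).filter (fun i => E i j'' ≤ x'')
              = (box E l r).filter (fun i => E i j'' ≤ y) :=
            Finset.filter_congr (fun i _ => by simpa using hiff i)
          have hfr : (box E l r).filter (fun i => ¬ E i j'' ≤ x'')
              = (box E l r).filter (fun i => ¬ E i j'' ≤ y) :=
            Finset.filter_congr (fun i _ => by simp [hiff i])
          rw [hfl, hfr, box_filter_le, box_filter_gt]
          refine le_trans
            (Nat.sInf_le (Or.inr ⟨exCost w w', by omega, j'', y, hymem, rfl⟩))
            (add_le_add (Qex_le E lab w w' _ _ _ hsw le_rfl)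
              ((Qex_anti E lab u _ _
                  (by omega : exCost u u' ≤ k' - exCost w w' - 1)).trans
                (Qex_le E lab u u' _ _ _ hsu le_rfl)))
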